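/- arXiv:1711.09282 — 6 statements merged into one kernel-verified Lean document; each statement's English description precedes it below -/
import Mathlib

section
/- Let G be a bipartite graph with parts X and Y, each of size n, with m edges. Then the number of copies of K_{a,b} in G with the a-side in X and the b-side in Y is at least C(n,a) * C( n*C(m/n, a) / C(n,a), b ), where C(x,k) denotes the generalized (truncated) binomial coefficient ∏_{i=0}^{k-1}(x-i)/k! when x ≥ k ≥ 0 and 0 otherwise. -/
open Finset
open scoped Classical

noncomputable def gbinom (x : ℝ) (k : ℕ) : ℝ :=
  if (k : ℝ) ≤ x then (∏ i ∈ Finset.range k, (x - i)) / (Nat.factorial k) else 0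

/-- continuous truncated descending factorial -/
noncomputable def tdf (k : ℕ) (x : ℝ) : ℝ := ∏ i ∈ Finset.range k, max (x - i) 0

lemma tdf_nonneg (k : ℕ) (x : ℝ) : 0 ≤ tdf k x :=
  Finset.prod_nonneg fun _ _ => le_max_right _ _

lemma tdf_mono (k : ℕ) : Monotone (tdf k) := fun x y hxy =>
  Finset.prod_le_prod (fun i _ => le_max_right _ _)
    (fun i _ => max_le_max (by linarith) le_rfl)

lemma tdf_convex (k : ℕ) : ConvexOn ℝ Set.univ (tdf k) := by
  induction k with
  | zero =>
    have : tdf 0 = fun _ => (1 : ℝ) := by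
      funext x; simp [tdf]
    rw [this]; exact convexOn_const 1 convex_univ
  | succ k ih =>
    have hg : ConvexOn ℝ Set.univ (fun x : ℝ => max (x - k) 0) := by
      have h1 : ConvexOn ℝ Set.univ (fun x : ℝ => x - k) :=
        (convexOn_id convex_univ).sub (concaveOn_const _ convex_univ)
      exact h1.sup (convexOn_const 0 convex_univ)
    have : tdf (k + 1) = tdf k * (fun x : ℝ => max (x - k) 0) := by
      funext x; simp [tdf, Finset.prod_range_succ]
    rw [this]
    exact ih.mul hg (fun x _ => tdf_nonneg k x) (fun x _ => le_max_right _ _)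
      (((tdf_mono k).monovary (fun x y hxy => max_le_max (by linarith) le_rfl)).monovaryOn _)

lemma cast_sub_max (d i : ℕ) : ((d - i : ℕ) : ℝ) = max ((d : ℝ) - i) 0 := by
  rcases le_total i d with h | h
  · rw [Nat.cast_sub h, max_eq_left (by simp [sub_nonneg, Nat.cast_le, h])]
  · rw [Nat.sub_eq_zero_of_le h, max_eq_right (by simp [sub_nonpos, Nat.cast_le, h])]
    simp

lemma tdf_natCast (k d : ℕ) : tdf k d = (d.descFactorial k : ℝ) := by
  rw [Nat.descFactorial_eq_prod_range, Nat.cast_prod, tdf]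
  exact Finset.prod_congr rfl fun i _ => (cast_sub_max d i).symm

lemma tdf_natCast' (k d : ℕ) : tdf k d = (d.choose k : ℝ) * (k.factorial : ℝ) := by
  rw [tdf_natCast, Nat.descFactorial_eq_factorial_mul_choose, Nat.cast_mul]; ring

lemma gbinom_nat (d k : ℕ) : gbinom d k = (d.choose k : ℝ) := by
  unfold gbinom
  rcases le_or_gt k d with h | h
  · rw [if_pos (by exact_mod_cast h)]
    have : ∏ i ∈ Finset.range k, ((d : ℝ) - i) = (d.descFactorial k : ℝ) := by
      rw [Nat.descFactorial_eq_prod_range, Nat.cast_prod]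
      refine Finset.prod_congr rfl fun i hi => ?_
      rw [Nat.cast_sub (le_trans (Nat.le_of_lt_succ (Nat.lt_succ_of_lt (Finset.mem_range.mp hi))) h)]
    rw [this, Nat.descFactorial_eq_factorial_mul_choose, Nat.cast_mul]
    rw [mul_comm, mul_div_assoc, div_self (by positivity), mul_one]
  · rw [if_neg (by exact_mod_cast not_le.mpr h), Nat.choose_eq_zero_of_lt h]
    simp

lemma factorial_mul_gbinom_le (k : ℕ) (x : ℝ) :
    (k.factorial : ℝ) * gbinom x k ≤ tdf k x := by
  unfold gbinom
  split_ifs with h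
  · have : tdf k x = ∏ i ∈ Finset.range k, (x - i) := by
      refine Finset.prod_congr rfl fun i hi => ?_
      have hi' : (i : ℝ) < k := by exact_mod_cast Finset.mem_range.mp hi
      exact max_eq_left (by linarith)
    rw [this, mul_div_cancel₀]
    positivity
  · simpa using tdf_nonneg k x

lemma gbinom_nonneg (x : ℝ) (k : ℕ) : 0 ≤ gbinom x k := by
  unfold gbinom
  split_ifs with h
  · apply div_nonneg _ (by positivity)
    apply Finset.prod_nonneg
    intro i hi
    have hi' : (i : ℝ) < k := by exact_mod_cast Finset.mem_range.mp hi
    linarith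
  · exact le_refl _

lemma jensen_tdf {ι : Type*} (t : Finset ι) (ht : t.Nonempty) (p : ι → ℝ) (k : ℕ) :
    (t.card : ℝ) * tdf k ((∑ i ∈ t, p i) / t.card) ≤ ∑ i ∈ t, tdf k (p i) := by
  have hc : (0 : ℝ) < t.card := by exact_mod_cast Finset.card_pos.mpr ht
  have h := (tdf_convex k).map_sum_le (t := t) (w := fun _ => (t.card : ℝ)⁻¹)
    (p := p) (fun i _ => by positivity)
    (by rw [Finset.sum_const, nsmul_eq_mul, mul_inv_cancel₀ (ne_of_gt hc)])
    (fun i _ => Set.mem_univ _)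
  simp only [smul_eq_mul] at h
  rw [← Finset.mul_sum, ← Finset.mul_sum, inv_mul_eq_div] at h
  calc (t.card : ℝ) * tdf k ((∑ i ∈ t, p i) / t.card) ≤
      (t.card : ℝ) * ((t.card:ℝ)⁻¹ * ∑ i ∈ t, tdf k (p i)) :=
        mul_le_mul_of_nonneg_left h (le_of_lt hc)
    _ = ∑ i ∈ t, tdf k (p i) := by field_simp

/-- Theoretical lower bound: the number of copies of `K_{a,b}` with `a`-side in `X`
in a bipartite graph `G ⊆ K_{n,n}` with `m` edges is at least
`C(n,a) * C(n*C(m/n,a)/C(n,a), b)`. -/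
theorem stmt0 (n m a b : ℕ) (hn : 0 < n) (G : Finset (Fin n × Fin n)) (hm : G.card = m) :
    gbinom n a * gbinom ((n * gbinom ((m : ℝ) / n) a) / gbinom n a) b ≤
    ((((Finset.univ.powersetCard a) ×ˢ (Finset.univ.powersetCard b)).filter
      (fun AB : Finset (Fin n) × Finset (Fin n) =>
        ∀ x ∈ AB.1, ∀ y ∈ AB.2, (x, y) ∈ G)).card : ℝ) := by
  rcases lt_or_ge n a with hna | hna
  · -- a > n : gbinom n a = 0
    have h0 : gbinom (n : ℝ) a = 0 := by
      unfold gbinom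
      rw [if_neg (by exact_mod_cast not_le.mpr hna)]
    rw [h0, zero_mul]
    exact Nat.cast_nonneg _
  -- main case a ≤ n
  set nb : Finset (Fin n) → Finset (Fin n) :=
    fun A => Finset.univ.filter (fun y => ∀ x ∈ A, (x, y) ∈ G) with hnb
  set Nx : Fin n → Finset (Fin n) :=
    fun y => Finset.univ.filter (fun x => (x, y) ∈ G) with hNx
  have stepA : (((Finset.univ.powersetCard a) ×ˢ (Finset.univ.powersetCard b)).filter
      (fun AB : Finset (Fin n) × Finset (Fin n) =>
        ∀ x ∈ AB.1, ∀ y ∈ AB.2, (x, y) ∈ G)).card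
      = ∑ A ∈ Finset.univ.powersetCard a, ((nb A).card).choose b := by
    rw [Finset.card_filter, Finset.sum_product]
    refine Finset.sum_congr rfl fun A hA => ?_
    rw [← Finset.card_filter]
    have h : (Finset.univ.powersetCard b).filter (fun B => ∀ x ∈ A, ∀ y ∈ B, (x, y) ∈ G)
        = (nb A).powersetCard b := by
      ext B
      simp only [hnb, Finset.mem_filter, Finset.mem_powersetCard, Finset.subset_iff,
        Finset.mem_univ, true_and]
      tauto
    rw [h, Finset.card_powersetCard]
  have stepB : ∑ A ∈ Finset.univ.powersetCard a, (nb A).card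
      = ∑ y : Fin n, ((Nx y).card).choose a := by
    rw [Finset.sum_congr rfl fun A (_ : A ∈ Finset.univ.powersetCard a) =>
      Finset.card_filter _ _, Finset.sum_comm]
    refine Finset.sum_congr rfl fun y hy => ?_
    rw [← Finset.card_filter]
    have h : (Finset.univ.powersetCard a).filter (fun A : Finset (Fin n) => ∀ x ∈ A, (x, y) ∈ G)
        = (Nx y).powersetCard a := by
      ext A
      simp only [hNx, Finset.mem_filter, Finset.mem_powersetCard, Finset.subset_iff,
        Finset.mem_univ, true_and]
      tauto
    rw [h, Finset.card_powersetCard]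
  have stepM : ∑ y : Fin n, (Nx y).card = m := by
    rw [← hm]
    rw [Finset.card_eq_sum_card_fiberwise (f := Prod.snd) (t := Finset.univ)
      (fun p _ => Finset.mem_univ _)]
    refine (Finset.sum_congr rfl fun y _ => ?_).symm
    have h : Nx y = (G.filter fun p => p.2 = y).image Prod.fst := by
      ext x
      simp only [hNx, Finset.mem_filter, Finset.mem_univ, true_and, Finset.mem_image]
      constructor
      · intro hx; exact ⟨(x, y), ⟨hx, rfl⟩, rfl⟩
      · rintro ⟨⟨x', y'⟩, ⟨hg, rfl⟩, rfl⟩; exact hg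
    rw [h, Finset.card_image_of_injOn]
    rintro ⟨x1, y1⟩ h1 ⟨x2, y2⟩ h2 h12
    simp only [Finset.mem_coe, Finset.mem_filter] at h1 h2
    simp only at h12
    rw [Prod.ext_iff]; exact ⟨h12, h1.2.trans h2.2.symm⟩
  -- notation
  set cN : ℝ := (n.choose a : ℝ) with hcNdef
  have hcN : (0 : ℝ) < cN := by rw [hcNdef]; exact_mod_cast Nat.choose_pos hna
  have hga : gbinom (n : ℝ) a = cN := gbinom_nat n a
  have hcardP : ((Finset.univ : Finset (Fin n)).powersetCard a).card = n.choose a := by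
    rw [Finset.card_powersetCard, Finset.card_univ, Fintype.card_fin]
  have hPne : ((Finset.univ : Finset (Fin n)).powersetCard a).Nonempty := by
    rw [← Finset.card_pos, hcardP]; exact Nat.choose_pos hna
  set S : ℝ := ∑ A ∈ Finset.univ.powersetCard a, ((nb A).card : ℝ) with hSdef
  have hfa : (0 : ℝ) < (a.factorial : ℝ) := by positivity
  have hfb : (0 : ℝ) < (b.factorial : ℝ) := by positivity
  -- key1 : n * gbinom (m/n) a ≤ S
  have key1 : (n : ℝ) * gbinom ((m : ℝ) / n) a ≤ S := by
    haveI : Nonempty (Fin n) := ⟨⟨0, hn⟩⟩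
    have j1 := jensen_tdf (Finset.univ : Finset (Fin n)) Finset.univ_nonempty
      (fun y => ((Nx y).card : ℝ)) a
    rw [Finset.card_univ, Fintype.card_fin] at j1
    have hsum : (∑ y : Fin n, ((Nx y).card : ℝ)) = (m : ℝ) := by
      rw [← Nat.cast_sum, stepM]
    rw [hsum] at j1
    have hrhs : (∑ y : Fin n, tdf a ((Nx y).card : ℝ)) = S * (a.factorial : ℝ) := by
      rw [hSdef, Finset.sum_mul]
      rw [show (∑ y : Fin n, tdf a ((Nx y).card : ℝ))
          = ∑ y : Fin n, ((Nx y).card.choose a : ℝ) * (a.factorial : ℝ) from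
        Finset.sum_congr rfl fun y _ => tdf_natCast' a _]
      rw [← Finset.sum_mul, ← Finset.sum_mul]
      congr 1
      rw [← Nat.cast_sum, ← Nat.cast_sum, stepB]
    rw [hrhs] at j1
    have hle : (n : ℝ) * ((a.factorial : ℝ) * gbinom ((m : ℝ) / n) a)
        ≤ (n : ℝ) * tdf a ((m : ℝ) / n) :=
      mul_le_mul_of_nonneg_left (factorial_mul_gbinom_le a _) (Nat.cast_nonneg n)
    nlinarith
  -- key2
  have hX : (n : ℝ) * gbinom ((m : ℝ) / n) a / cN ≤ S / cN := by
    gcongr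
  have j2 := jensen_tdf ((Finset.univ : Finset (Fin n)).powersetCard a) hPne
    (fun A => ((nb A).card : ℝ)) b
  rw [hcardP] at j2
  have hrhs2 : (∑ A ∈ Finset.univ.powersetCard a, tdf b ((nb A).card : ℝ))
      = (((((Finset.univ.powersetCard a) ×ˢ (Finset.univ.powersetCard b)).filter
      (fun AB : Finset (Fin n) × Finset (Fin n) =>
        ∀ x ∈ AB.1, ∀ y ∈ AB.2, (x, y) ∈ G)).card : ℝ)) * (b.factorial : ℝ) := by
    rw [show (∑ A ∈ Finset.univ.powersetCard a, tdf b ((nb A).card : ℝ))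
        = ∑ A ∈ Finset.univ.powersetCard a, ((nb A).card.choose b : ℝ) * (b.factorial : ℝ) from
      Finset.sum_congr rfl fun A _ => tdf_natCast' b _]
    rw [← Finset.sum_mul]
    congr 1
    rw [← Nat.cast_sum, stepA]
  rw [hrhs2] at j2
  have hg2 : (b.factorial : ℝ) * gbinom ((n : ℝ) * gbinom ((m : ℝ) / n) a / cN) b
      ≤ tdf b (S / cN) :=
    (factorial_mul_gbinom_le b _).trans (tdf_mono b hX)
  rw [hga]
  have := mul_le_mul_of_nonneg_left hg2 (le_of_lt hcN)
  nlinarith [gbinom_nonneg ((n : ℝ) * gbinom ((m : ℝ) / n) a / cN) b,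
    tdf_nonneg b (S / cN)]
end

section
/- Let n = q² + q + 1 be odd and let D ⊆ ℤ/nℤ be a planar difference set of size q+1 (every nonzero element has exactly one representation as a difference of two elements of D). Then the number of elements g ∈ ℤ/nℤ such that D ∪ {g} is a proper extension in which every nonzero element has at most two representations as a difference (i.e., g ∉ D and there is no pair d, d' ∈ D with d + d' = 2g) equals C(q,2) = q(q-1)/2. -/
open Finset
open scoped Classical

/-- For a planar difference set `D` of size `q+1` in `ℤ/nℤ`, `n = q²+q+1` odd, the number of
completion elements (`g ∉ D` with `d + d' ≠ 2g` for all `d, d' ∈ D`) equals `q(q-1)/2`. -/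
theorem stmt8 (q n : ℕ) (hq : 1 ≤ q) (hn : n = q ^ 2 + q + 1) [NeZero n] (hodd : Odd n)
    (D : Finset (ZMod n)) (hcard : D.card = q + 1)
    (hplanar : ∀ g : ZMod n, g ≠ 0 → ((D ×ˢ D).filter (fun p => p.1 - p.2 = g)).card = 1) :
    ((univ : Finset (ZMod n)).filter
        (fun g => g ∉ D ∧ ∀ d ∈ D, ∀ d' ∈ D, d + d' ≠ 2 * g)).card = q * (q - 1) / 2 := by
  classical
  -- 2 is a unit
  have h2 : IsUnit (2 : ZMod n) := by
    have hc : Nat.Coprime 2 n := Nat.coprime_two_left.mpr hodd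
    have := (ZMod.isUnit_iff_coprime 2 n).mpr hc
    simpa using this
  -- Sidon property
  have hSidon : ∀ a ∈ D, ∀ b ∈ D, ∀ c ∈ D, ∀ d ∈ D,
      a + b = c + d → (a = c ∧ b = d) ∨ (a = d ∧ b = c) := by
    intro a ha b hb c hc d hd h
    by_cases hac : a = c
    · subst hac
      exact Or.inl ⟨rfl, add_left_cancel h⟩
    · right
      have h1 : a - c ≠ 0 := sub_ne_zero.mpr hac
      obtain ⟨x, hx⟩ := Finset.card_eq_one.mp (hplanar (a - c) h1)
      have hm1 : (a, c) ∈ (D ×ˢ D).filter (fun p => p.1 - p.2 = a - c) := by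
        simp [Finset.mem_filter, Finset.mem_product, ha, hc]
      have hm2 : (d, b) ∈ (D ×ˢ D).filter (fun p => p.1 - p.2 = a - c) := by
        have hdb : d - b = a - c := by linear_combination -h
        simp [Finset.mem_filter, Finset.mem_product, hd, hb, hdb]
      rw [hx, Finset.mem_singleton] at hm1 hm2
      have heq : (a, c) = (d, b) := hm1.trans hm2.symm
      exact ⟨congrArg Prod.fst heq, (congrArg Prod.snd heq).symm⟩
  -- the "half-sum" map on Sym2
  set f : Sym2 (ZMod n) → ZMod n :=
    fun z => (2 : ZMod n)⁻¹ * Sym2.lift ⟨fun a b => a + b, fun a b => add_comm a b⟩ z with hf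
  have hfval : ∀ a b : ZMod n, f s(a, b) = (2 : ZMod n)⁻¹ * (a + b) := by
    intro a b; simp [hf]
  have hhalf : ∀ a b g : ZMod n, a + b = 2 * g → f s(a, b) = g := by
    intro a b g hab
    rw [hfval, hab, ← mul_assoc, ZMod.inv_mul_of_unit _ h2, one_mul]
  have hhalf' : ∀ a b : ZMod n, a + b = 2 * f s(a, b) := by
    intro a b
    rw [hfval, ← mul_assoc, ZMod.mul_inv_of_unit _ h2, one_mul]
  -- the bad set is the image of D.sym2 under f
  have hset : (univ : Finset (ZMod n)).filter
      (fun g => g ∉ D ∧ ∀ d ∈ D, ∀ d' ∈ D, d + d' ≠ 2 * g)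
      = (D.sym2.image f)ᶜ := by
    ext g
    simp only [Finset.mem_filter, Finset.mem_univ, true_and, Finset.mem_compl]
    constructor
    · rintro ⟨hgD, hg⟩ hmem
      obtain ⟨z, hz, hfz⟩ := Finset.mem_image.mp hmem
      induction z using Sym2.inductionOn with
      | hf a b =>
        rw [Finset.mk_mem_sym2_iff] at hz
        apply hg a hz.1 b hz.2
        rw [← hfz]
        exact hhalf' a b
    · intro hg
      refine ⟨fun hgD => ?_, fun d hd d' hd' hdd => ?_⟩
      · exact hg (Finset.mem_image.mpr ⟨s(g, g), Finset.mk_mem_sym2_iff.mpr ⟨hgD, hgD⟩,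
          hhalf g g g (by ring)⟩)
      · exact hg (Finset.mem_image.mpr ⟨s(d, d'), Finset.mk_mem_sym2_iff.mpr ⟨hd, hd'⟩,
          hhalf d d' g hdd⟩)
  rw [hset, Finset.card_compl]
  -- injectivity of f on D.sym2
  have hinj : Set.InjOn f D.sym2 := by
    intro z hz w hw hzw
    induction z using Sym2.inductionOn with
    | hf a b =>
      induction w using Sym2.inductionOn with
      | hf c d =>
        rw [Finset.mem_coe, Finset.mk_mem_sym2_iff] at hz hw
        have hab : a + b = c + d := by
          rw [hhalf' a b, hhalf' c d, hzw]
        rcases hSidon a hz.1 b hz.2 c hw.1 d hw.2 hab with ⟨e1, e2⟩ | ⟨e1, e2⟩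
        · rw [e1, e2]
        · rw [e1, e2, Sym2.eq_swap]
  rw [Finset.card_image_of_injOn hinj, Finset.card_sym2, hcard]
  rw [ZMod.card n, hn]
  -- arithmetic
  obtain ⟨m, rfl⟩ : ∃ m, q = m + 1 := ⟨q - 1, by omega⟩
  have hch : Nat.choose (m + 1 + 1 + 1) 2 = (m * m + 5 * m + 6) / 2 := by
    rw [Nat.choose_two_right]
    have h' : m + 1 + 1 + 1 - 1 = m + 2 := rfl
    rw [h']
    congr 1
    ring
  rw [hch]
  have hsq : (m + 1) ^ 2 + (m + 1) + 1 = m * m + 3 * m + 3 := by ring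
  rw [hsq]
  have hmm : (m + 1) * (m + 1 - 1) = m * m + m := by
    have h' : m + 1 - 1 = m := rfl
    rw [h']; ring
  rw [hmm]
  obtain ⟨t, ht⟩ : ∃ t, m * m + m = 2 * t := by
    have := Nat.even_mul_succ_self m
    obtain ⟨t, ht⟩ := this
    exact ⟨t, by rw [Nat.mul_succ] at ht; omega⟩
  omega
end

section
/- Let q be an odd prime power and k a positive divisor of q - 1. The bipartite graph G^{(q,k)} on vertex classes V₁ = V₂ = 𝔽_q × {1, …, (q-1)/k}, with (a,b) ∈ V₁ adjacent to (α,β) ∈ V₂ iff g^β a + g^b α = g^{j(q-1)/k} in 𝔽_q for some j ∈ ℤ/kℤ (g a fixed primitive root of 𝔽_q), is (q-1)-regular; in particular it has q(q-1)²/k edges. -/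
open Finset
open scoped Classical

def morsAdj {F : Type*} [Field F] (q k : ℕ) (g : Fˣ) :
    F × Fin ((q - 1) / k) → F × Fin ((q - 1) / k) → Prop :=
  fun v w => ∃ j < k,
    (g : F) ^ (w.2.val + 1) * v.1 + (g : F) ^ (v.2.val + 1) * w.1
      = (g : F) ^ (j * ((q - 1) / k))

/-- `G^{(q,k)}` is `(q-1)`-regular; in particular it has `q(q-1)²/k` edges. -/
theorem stmt11 {F : Type*} [Field F] [Fintype F] (q k : ℕ) (hq : Fintype.card F = q)
    (hk : 0 < k) (hdvd : k ∣ q - 1) (g : Fˣ) (hgen : ∀ x : Fˣ, x ∈ Subgroup.zpowers g) :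
    (∀ v : F × Fin ((q - 1) / k),
        ((univ : Finset (F × Fin ((q - 1) / k))).filter (fun w => morsAdj q k g v w)).card
          = q - 1) ∧
      ((univ : Finset ((F × Fin ((q - 1) / k)) × (F × Fin ((q - 1) / k)))).filter
          (fun p => morsAdj q k g p.1 p.2)).card = q * (q - 1) ^ 2 / k := by
  have hq2 : 2 ≤ q := by
    have := Fintype.one_lt_card (α := F)
    omega
  have hmk : (q - 1) / k * k = q - 1 := Nat.div_mul_cancel hdvd
  have hmpos : 0 < (q - 1) / k :=
    Nat.div_pos (Nat.le_of_dvd (by omega) hdvd) hk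
  have horder : orderOf g = q - 1 := by
    have := orderOf_eq_card_of_forall_mem_zpowers hgen
    rwa [Nat.card_eq_fintype_card, Fintype.card_units, hq] at this
  have hginj : ∀ i j : ℕ, i < q - 1 → j < q - 1 → (g : F) ^ i = (g : F) ^ j → i = j := by
    intro i j hi hj hij
    have h : g ^ i = g ^ j := Units.ext (by simpa using hij)
    exact pow_injOn_Iio_orderOf (by simpa [horder, Set.mem_Iio] using hi)
      (by simpa [horder, Set.mem_Iio] using hj) h
  have hgne : ∀ n : ℕ, (g : F) ^ n ≠ 0 := fun n => pow_ne_zero n (Units.ne_zero g)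
  have hdeg : ∀ v : F × Fin ((q - 1) / k),
      ((univ : Finset (F × Fin ((q - 1) / k))).filter (fun w => morsAdj q k g v w)).card
        = q - 1 := by
    intro v
    have hb := Finset.card_bij
      (s := (univ : Finset (Fin ((q - 1) / k) × Fin k)))
      (t := (univ : Finset (F × Fin ((q - 1) / k))).filter (fun w => morsAdj q k g v w))
      (fun p _ =>
        (((g : F) ^ (p.2.val * ((q - 1) / k)) - (g : F) ^ (p.1.val + 1) * v.1)
            / (g : F) ^ (v.2.val + 1), p.1))
      (by
        intro p _
        rw [Finset.mem_filter]
        simp only [mem_univ, true_and, morsAdj]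
        exact ⟨p.2.val, p.2.isLt, by field_simp; ring⟩)
      (by
        intro p _ p' _ h
        have h2 : p.1 = p'.1 := congrArg Prod.snd h
        have h1 := congrArg Prod.fst h
        simp only at h1
        rw [div_eq_div_iff (hgne _) (hgne _)] at h1
        have h1' : (g : F) ^ (p.2.val * ((q - 1) / k)) = (g : F) ^ (p'.2.val * ((q - 1) / k)) := by
          rw [h2] at h1
          have h4 := mul_right_cancel₀ (hgne (v.2.val + 1)) h1
          exact sub_left_injective h4
        have hlt : ∀ j : Fin k, j.val * ((q - 1) / k) < q - 1 := by
          intro j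
          calc j.val * ((q - 1) / k) < k * ((q - 1) / k) :=
                Nat.mul_lt_mul_of_lt_of_le j.isLt (le_refl _) hmpos
            _ = q - 1 := by rw [mul_comm]; exact hmk
        have := hginj _ _ (hlt p.2) (hlt p'.2) h1'
        have h3 : p.2 = p'.2 := Fin.ext (Nat.eq_of_mul_eq_mul_right hmpos this)
        exact Prod.ext h2 h3)
      (by
        intro w hw
        rw [Finset.mem_filter] at hw
        simp only [mem_univ, true_and, morsAdj] at hw
        obtain ⟨j, hj, heq⟩ := hw
        refine ⟨(w.2, ⟨j, hj⟩), mem_univ _, ?_⟩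
        refine Prod.ext ?_ rfl
        simp only
        rw [div_eq_iff (hgne _)]
        linear_combination -heq)
    rw [← hb]
    simp [Fintype.card_fin, hmk, mul_comm]
  refine ⟨hdeg, ?_⟩
  have hsum : ((univ : Finset ((F × Fin ((q - 1) / k)) × (F × Fin ((q - 1) / k)))).filter
      (fun p => morsAdj q k g p.1 p.2)).card
      = ∑ v : F × Fin ((q - 1) / k),
          ((univ : Finset (F × Fin ((q - 1) / k))).filter (fun w => morsAdj q k g v w)).card := by
    rw [Finset.card_filter, Fintype.sum_prod_type]
    exact Finset.sum_congr rfl fun v _ => (Finset.card_filter _ _).symm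
  rw [hsum]
  simp only [hdeg]
  rw [Finset.sum_const, card_univ, Fintype.card_prod, hq, Fintype.card_fin]
  obtain ⟨m, hm⟩ := hdvd
  have hdiv : (q - 1) / k = m := by rw [hm, Nat.mul_div_cancel_left _ hk]
  rw [hdiv, smul_eq_mul]
  have : q * (q - 1) ^ 2 = (q * m * (q - 1)) * k := by rw [pow_two]; nth_rewrite 1 [hm]; ring
  rw [this, Nat.mul_div_cancel _ hk]
end

section
/- Let G ⊆ K_{n,n} be a bipartite graph with m edges containing the incidence graph of a projective plane of order q (n = q² + q + 1) as a spanning subgraph, where m > z + n with z = (q+1)n the number of incidences of the plane. Then there exist two vertices P (a point) and e, f (lines) such that P is adjacent to both e and f in G but incident to neither in the plane; consequently there is a pair of vertices with codegree at least 3, so G does not meet the improved theoretical lower bound (which requires all codegrees to differ by at most 1 from each other while some pairs have codegree 1). -/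
open Finset
open scoped Classical

/-- If `G ⊆ K_{n,n}` with `m > (q+1)n + n` edges contains the incidence graph `I` of a
projective plane of order `q` (`n = q²+q+1`), then some point `P` is joined in `G` to two
lines `e ≠ f` not through `P` in the plane, and consequently some pair of vertices has
codegree at least `3` in `G`. -/
theorem stmt14 (q n m : ℕ) (hn : n = q ^ 2 + q + 1)
    (I G : Fin n → Fin n → Prop)
    (hpointdeg : ∀ p, ((univ : Finset (Fin n)).filter (fun l => I p l)).card = q + 1)
    (hlinedeg : ∀ l, ((univ : Finset (Fin n)).filter (fun p => I p l)).card = q + 1)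
    (hpts : ∀ p p' : Fin n, p ≠ p' →
      ((univ : Finset (Fin n)).filter (fun l => I p l ∧ I p' l)).card = 1)
    (hlines : ∀ l l' : Fin n, l ≠ l' →
      ((univ : Finset (Fin n)).filter (fun p => I p l ∧ I p l')).card = 1)
    (hsub : ∀ p l, I p l → G p l)
    (hm : ((univ : Finset (Fin n × Fin n)).filter (fun pl => G pl.1 pl.2)).card = m)
    (hex : (q + 1) * n + n < m) :
    (∃ P e f : Fin n, e ≠ f ∧ G P e ∧ G P f ∧ ¬ I P e ∧ ¬ I P f) ∧
      (∃ P Q : Fin n, P ≠ Q ∧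
        3 ≤ ((univ : Finset (Fin n)).filter (fun l => G P l ∧ G Q l)).card) := by
  -- m = ∑ p, deg_G p
  have hsum : m = ∑ p : Fin n, ((univ : Finset (Fin n)).filter (fun l => G p l)).card := by
    rw [← hm]
    rw [Finset.card_eq_sum_card_fiberwise (f := Prod.fst) (t := (univ : Finset (Fin n)))
      (fun x _ => mem_univ _)]
    apply Finset.sum_congr rfl
    intro p _
    rw [Finset.filter_filter]
    apply Finset.card_bij (fun pl _ => pl.2)
    · intro pl hpl
      simp only [mem_filter, mem_univ, true_and] at hpl ⊢
      exact hpl.2 ▸ hpl.1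
    · intro a ha b hb hab
      simp only [mem_filter, mem_univ, true_and] at ha hb
      exact Prod.ext (ha.2.trans hb.2.symm) hab
    · intro l hl
      simp only [mem_filter, mem_univ, true_and] at hl ⊢
      exact ⟨(p, l), ⟨hl, rfl⟩, rfl⟩
  -- deg_G p = (q+1) + extra p
  have hsplit : ∀ p : Fin n,
      ((univ : Finset (Fin n)).filter (fun l => G p l)).card
        = (q + 1) + ((univ : Finset (Fin n)).filter (fun l => G p l ∧ ¬ I p l)).card := by
    intro p
    rw [← hpointdeg p]
    have h1 : (univ : Finset (Fin n)).filter (fun l => I p l)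
        ⊆ (univ : Finset (Fin n)).filter (fun l => G p l) := by
      intro l hl
      simp only [mem_filter] at *
      exact ⟨hl.1, hsub p l hl.2⟩
    have := Finset.card_filter_add_card_filter_not
      (s := (univ : Finset (Fin n)).filter (fun l => G p l)) (p := fun l => I p l)
    rw [Finset.filter_filter, Finset.filter_filter] at this
    have h2 : ((univ : Finset (Fin n)).filter (fun l => G p l ∧ I p l))
        = (univ : Finset (Fin n)).filter (fun l => I p l) := by
      ext l; simp only [mem_filter, mem_univ, true_and]
      exact ⟨fun h => h.2, fun h => ⟨hsub p l h, h⟩⟩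
    rw [h2] at this
    omega
  -- sum of extras > n
  have hextra : n < ∑ p : Fin n,
      ((univ : Finset (Fin n)).filter (fun l => G p l ∧ ¬ I p l)).card := by
    have : ∑ p : Fin n, ((univ : Finset (Fin n)).filter (fun l => G p l)).card
        = (q + 1) * n + ∑ p : Fin n,
          ((univ : Finset (Fin n)).filter (fun l => G p l ∧ ¬ I p l)).card := by
      rw [Finset.sum_congr rfl (fun p _ => hsplit p), Finset.sum_add_distrib,
        Finset.sum_const, Finset.card_univ, Fintype.card_fin, smul_eq_mul, mul_comm]
    omega
  -- pigeonhole: some p has ≥ 2 extras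
  have hP : ∃ P : Fin n,
      2 ≤ ((univ : Finset (Fin n)).filter (fun l => G P l ∧ ¬ I P l)).card := by
    by_contra h
    push_neg at h
    have : ∑ p : Fin n, ((univ : Finset (Fin n)).filter (fun l => G p l ∧ ¬ I p l)).card
        ≤ ∑ _p : Fin n, 1 := by
      apply Finset.sum_le_sum
      intro p _
      have := h p
      omega
    simp only [Finset.sum_const, Finset.card_univ, Fintype.card_fin, smul_eq_mul, mul_one] at this
    omega
  obtain ⟨P, hP2⟩ := hP
  obtain ⟨e, he, f, hf, hef⟩ := Finset.one_lt_card.mp hP2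
  simp only [mem_filter, mem_univ, true_and] at he hf
  have main : ∃ P e f : Fin n, e ≠ f ∧ G P e ∧ G P f ∧ ¬ I P e ∧ ¬ I P f :=
    ⟨P, e, f, hef, he.1, hf.1, he.2, hf.2⟩
  refine ⟨main, ?_⟩
  -- Q: intersection of e and f
  have hQ := hlines e f hef
  obtain ⟨Q, hQmem⟩ := Finset.card_eq_one.mp hQ
  have hQ' : I Q e ∧ I Q f := by
    have : Q ∈ (univ : Finset (Fin n)).filter (fun p => I p e ∧ I p f) := by
      rw [hQmem]; exact Finset.mem_singleton_self Q
    simpa using this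
  have hPQ : P ≠ Q := fun h => he.2 (h ▸ hQ'.1)
  -- line through P and Q
  obtain ⟨l0, hl0mem⟩ := Finset.card_eq_one.mp (hpts P Q hPQ)
  have hl0 : I P l0 ∧ I Q l0 := by
    have : l0 ∈ (univ : Finset (Fin n)).filter (fun l => I P l ∧ I Q l) := by
      rw [hl0mem]; exact Finset.mem_singleton_self l0
    simpa using this
  refine ⟨P, Q, hPQ, ?_⟩
  have hsubset : ({e, f, l0} : Finset (Fin n))
      ⊆ (univ : Finset (Fin n)).filter (fun l => G P l ∧ G Q l) := by
    intro x hx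
    simp only [Finset.mem_insert, Finset.mem_singleton] at hx
    simp only [mem_filter, mem_univ, true_and]
    rcases hx with rfl | rfl | rfl
    · exact ⟨he.1, hsub _ _ hQ'.1⟩
    · exact ⟨hf.1, hsub _ _ hQ'.2⟩
    · exact ⟨hsub _ _ hl0.1, hsub _ _ hl0.2⟩
  have hcard : ({e, f, l0} : Finset (Fin n)).card = 3 := by
    have h1 : e ≠ l0 := fun h => he.2 (h ▸ hl0.1)
    have h2 : f ≠ l0 := fun h => hf.2 (h ▸ hl0.1)
    rw [Finset.card_insert_of_notMem (by simp [hef, h1]),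
      Finset.card_insert_of_notMem (by simp [h2]), Finset.card_singleton]
  calc 3 = ({e, f, l0} : Finset (Fin n)).card := hcard.symm
    _ ≤ _ := Finset.card_le_card hsubset
end

section
/- If G ⊆ K_{n,n} has m = C·n^{3/2}(1+o(1)) edges with C > 1 fixed, then the number of C₄'s in G is at least ((C⁴ - C²)/4 + o(1))·n², which for C² = k an integer equals (k(k-1)/4 + o(1))n². In exact form: for any bipartite G on n+n vertices with m edges and m(m-n) ≥ n²(n-1), the number of C₄'s is at least (1/2)·C(n,2)·(m(m-n)/(n²(n-1)))·(m(m-n)/(n²(n-1)) - 1). -/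
open Finset
open scoped Classical

/-- Exact supersaturation bound for `C₄`: if `G ⊆ K_{n,n}` has `m` edges and
`m(m-n) ≥ n²(n-1)`, then the number of `C₄`'s (pairs of 2-subsets, one in each class, with
all four edges present) is at least `(n(n-1)/4)·D·(D-1)` with `D = m(m-n)/(n²(n-1))`. -/
theorem stmt16 (n m : ℕ) (G : Finset (Fin n × Fin n)) (hm : G.card = m)
    (hD : (n : ℝ) ^ 2 * ((n : ℝ) - 1) ≤ (m : ℝ) * ((m : ℝ) - n)) :
    (n : ℝ) * ((n : ℝ) - 1) / 4 *
        ((m : ℝ) * ((m : ℝ) - n) / ((n : ℝ) ^ 2 * ((n : ℝ) - 1))) *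
        ((m : ℝ) * ((m : ℝ) - n) / ((n : ℝ) ^ 2 * ((n : ℝ) - 1)) - 1) ≤
      (((((univ : Finset (Fin n)).powersetCard 2) ×ˢ ((univ : Finset (Fin n)).powersetCard 2)).filter
        (fun st : Finset (Fin n) × Finset (Fin n) =>
          ∀ x ∈ st.1, ∀ y ∈ st.2, (x, y) ∈ G)).card : ℝ) := by
  rcases Nat.lt_or_ge n 2 with hn | hn
  · interval_cases n <;> norm_num
  · set P := (univ : Finset (Fin n)).powersetCard 2 with hPdef
    have key : ∀ q : Fin n → Prop, ∀ _ : DecidablePred q,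
        P.filter (fun s => ∀ x ∈ s, q x) = (univ.filter q).powersetCard 2 := by
      intro q _
      ext s
      simp only [hPdef, mem_filter, mem_powersetCard, subset_iff, mem_univ, true_and,
        Finset.mem_filter]
      tauto
    set f : Finset (Fin n) → ℕ :=
      fun s => (univ.filter (fun y => ∀ x ∈ s, (x, y) ∈ G)).card with hf
    set Γ : Fin n → Finset (Fin n) := fun y => univ.filter (fun x => (x, y) ∈ G) with hΓ
    -- Step A
    have hA : (((P ×ˢ P).filter (fun st : Finset (Fin n) × Finset (Fin n) =>
          ∀ x ∈ st.1, ∀ y ∈ st.2, (x, y) ∈ G)).card)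
        = ∑ s ∈ P, (f s).choose 2 := by
      rw [card_filter, sum_product]
      refine sum_congr rfl fun s _ => ?_
      rw [← card_filter]
      have h1 : P.filter (fun t => ∀ x ∈ s, ∀ y ∈ t, (x, y) ∈ G)
          = P.filter (fun t => ∀ y ∈ t, (fun y => ∀ x ∈ s, (x, y) ∈ G) y) := by
        apply filter_congr
        intro t _
        constructor <;> intro h <;> intros <;> solve_by_elim
      rw [h1, key, card_powersetCard]
    -- Step B
    have hB : ∑ s ∈ P, f s = ∑ y : Fin n, ((Γ y).card).choose 2 := by
      have h2 : ∀ s, f s = ∑ y : Fin n, if (∀ x ∈ s, (x, y) ∈ G) then 1 else 0 := by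
        intro s; rw [hf]; exact card_filter _ _
      calc ∑ s ∈ P, f s
          = ∑ s ∈ P, ∑ y : Fin n, if (∀ x ∈ s, (x, y) ∈ G) then 1 else 0 := by
            exact sum_congr rfl fun s _ => h2 s
        _ = ∑ y : Fin n, ∑ s ∈ P, if (∀ x ∈ s, (x, y) ∈ G) then 1 else 0 := sum_comm
        _ = ∑ y : Fin n, (P.filter (fun s => ∀ x ∈ s, (x, y) ∈ G)).card := by
            exact sum_congr rfl fun y _ => (card_filter _ _).symm
        _ = ∑ y : Fin n, ((Γ y).powersetCard 2).card := by
            refine sum_congr rfl fun y _ => ?_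
            rw [key (fun x => (x, y) ∈ G) _]
        _ = ∑ y : Fin n, ((Γ y).card).choose 2 := by
            exact sum_congr rfl fun y _ => card_powersetCard _ _
    -- Step C
    have hC : ∑ y : Fin n, (Γ y).card = m := by
      rw [← hm]
      calc ∑ y : Fin n, (Γ y).card
          = ∑ y : Fin n, ∑ x : Fin n, if (x, y) ∈ G then 1 else 0 := by
            exact sum_congr rfl fun y _ => card_filter _ _
        _ = ∑ x : Fin n, ∑ y : Fin n, if (x, y) ∈ G then 1 else 0 := sum_comm
        _ = ∑ p ∈ (univ : Finset (Fin n)) ×ˢ univ, if p ∈ G then 1 else 0 := by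
            rw [sum_product]
        _ = G.card := by
            rw [univ_product_univ, ← card_filter]
            congr 1
            simp
    -- Analytic part
    have hn0 : (0:ℝ) < n := by positivity
    have hn2 : (2:ℝ) ≤ n := by exact_mod_cast hn
    have hn1 : (0:ℝ) < (n:ℝ) - 1 := by linarith
    set N : ℝ := (n:ℝ) * ((n:ℝ) - 1) / 2 with hN
    have hNpos : 0 < N := by rw [hN]; positivity
    have hPcard : (P.card : ℝ) = N := by
      rw [hPdef, card_powersetCard, card_univ, Fintype.card_fin, Nat.cast_choose_two, hN]
    set d : Fin n → ℝ := fun y => ((Γ y).card : ℝ) with hdd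
    have hd : ∑ y : Fin n, d y = m := by
      rw [hdd]; push_cast [← hC]; rfl
    have hCS1 : ((m:ℝ))^2 ≤ (n:ℝ) * ∑ y : Fin n, (d y)^2 := by
      have := sq_sum_le_card_mul_sum_sq (s := (univ : Finset (Fin n))) (f := d)
      rw [hd, card_univ, Fintype.card_fin] at this
      exact_mod_cast this
    set S : ℝ := ∑ s ∈ P, (f s : ℝ) with hS
    have hS_eq : S = (∑ y : Fin n, ((d y)^2 - d y)) / 2 := by
      have h3 : S = ∑ y : Fin n, (((Γ y).card).choose 2 : ℝ) := by
        rw [hS]; exact_mod_cast congrArg (Nat.cast (R := ℝ)) hB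
      rw [h3, sum_div]
      refine sum_congr rfl fun y _ => ?_
      rw [Nat.cast_choose_two]
      rw [hdd]; ring
    have hS_lb : (m:ℝ) * ((m:ℝ) - n) / (2*n) ≤ S := by
      rw [hS_eq, sum_sub_distrib, hd, div_le_div_iff₀ (by positivity) (by norm_num)]
      nlinarith [hCS1]
    set cnt := (((P ×ˢ P).filter (fun st : Finset (Fin n) × Finset (Fin n) =>
          ∀ x ∈ st.1, ∀ y ∈ st.2, (x, y) ∈ G)).card) with hcnt
    set t : ℝ := ∑ s ∈ P, ((f s : ℝ))^2 with ht
    have hcnt_eq : 2 * (cnt : ℝ) = t - S := by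
      have h4 : (cnt : ℝ) = ∑ s ∈ P, (((f s).choose 2 : ℕ) : ℝ) := by
        rw [hcnt]; exact_mod_cast congrArg (Nat.cast (R := ℝ)) hA
      rw [h4, ht, hS, ← sum_sub_distrib, Finset.mul_sum]
      refine sum_congr rfl fun s _ => ?_
      rw [Nat.cast_choose_two]; ring
    have hCS2 : S^2 ≤ N * t := by
      have := sq_sum_le_card_mul_sum_sq (s := P) (f := fun s => ((f s : ℝ)))
      rw [← hS, ← ht] at this
      calc S^2 ≤ (P.card : ℝ) * t := by exact_mod_cast this
        _ = N * t := by rw [hPcard]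
    set D : ℝ := (m : ℝ) * ((m : ℝ) - n) / ((n : ℝ) ^ 2 * ((n : ℝ) - 1)) with hDdef
    have hEpos : (0:ℝ) < (n : ℝ) ^ 2 * ((n : ℝ) - 1) := by positivity
    have hDge : 1 ≤ D := by rw [hDdef, le_div_iff₀ hEpos]; linarith
    have hND : N * D = (m:ℝ) * ((m:ℝ) - n) / (2*n) := by
      rw [hN, hDdef]; field_simp
    have hSge : N * D ≤ S := by rw [hND]; exact hS_lb
    clear_value P f Γ N d S t D cnt
    clear hA hB hC key hm hf hΓ hdd hS ht hcnt hPdef hd hCS1 hS_eq hS_lb hPcard hND hDdef hD hEpos G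
    have h5 : N * D * (N * D - N) ≤ S * (S - N) := by
      nlinarith [mul_nonneg (by linarith : (0:ℝ) ≤ S - N * D)
        (by nlinarith : (0:ℝ) ≤ S + N * D - N)]
    have h6 : N * D * (D - 1) ≤ 2 * (cnt : ℝ) := by
      have h7 : N * (2 * (cnt : ℝ)) = N * t - N * S := by rw [hcnt_eq]; ring
      have h8 : N * D * (N * D - N) ≤ N * (2 * (cnt : ℝ)) := by
        rw [h7]; nlinarith [hCS2]
      have h9 : N * (N * D * (D - 1)) ≤ N * (2 * (cnt : ℝ)) := by nlinarith [h8]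
      exact le_of_mul_le_mul_left h9 hNpos
    have h10 : (n : ℝ) * ((n : ℝ) - 1) / 4 * D * (D - 1) = N * D * (D - 1) / 2 := by
      rw [hN]; ring
    rw [h10]
    linarith
end

section
/- Let 𝒢 be a finite abelian group of odd order n, A ⊆ 𝒢 a subset of size k, and G(𝒢,A) the bipartite graph with parts {A+g : g ∈ 𝒢} (as indexed by g, i.e., vertices are group elements g representing the translate A+g) and 𝒢 itself, with g adjacent to h iff h ∈ A + g. Then the number of C₄'s in G(𝒢,A) equals (n/4)(h₂(𝒢,A) - h₁(𝒢,A)), where h_t(𝒢,A) = ∑_{0 ≠ g ∈ 𝒢} (#{(a,a') ∈ A×A : a - a' = g})^t. -/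
open Finset
open scoped Classical

lemma codeg_eq {G : Type*} [AddCommGroup G] [Fintype G] [DecidableEq G]
    (A : Finset G) (g₁ g₂ : G) :
    ((univ : Finset G).filter (fun h : G => h - g₁ ∈ A ∧ h - g₂ ∈ A)).card
      = ((A ×ˢ A).filter (fun p => p.1 - p.2 = g₂ - g₁)).card := by
  apply Finset.card_nbij' (fun h => (h - g₁, h - g₂)) (fun p => p.1 + g₁)
  · intro h hh
    simp only [mem_coe, mem_filter, mem_univ, true_and] at hh ⊢
    simp [mem_product, hh.1, hh.2]
  · intro p hp
    simp only [mem_coe, mem_filter, mem_product] at hp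
    simp only [mem_coe, mem_filter, mem_univ, true_and]
    constructor
    · simpa using hp.1.1
    · have := hp.2
      have : p.1 + g₁ - g₂ = p.2 := by
        have h2 : p.1 - p.2 = g₂ - g₁ := hp.2
        have : p.1 - (g₂ - g₁) = p.2 := by rw [← h2]; abel
        rw [← this]; abel
      rw [this]; exact hp.1.2
  · intro h _; simp
  · intro p hp
    simp only [mem_coe, mem_filter, mem_product] at hp
    have h2 : p.1 - p.2 = g₂ - g₁ := hp.2
    have : p.1 + g₁ - g₂ = p.2 := by
      have : p.1 - (g₂ - g₁) = p.2 := by rw [← h2]; abel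
      rw [← this]; abel
    simp [this]

/-- For a finite abelian group `𝒢` of odd order `n` and `A ⊆ 𝒢` of size `k`, the number of
`C₄`'s in the bipartite Cayley-type graph `G(𝒢,A)` (first class indexed by `g`, representing
the translate `A + g`; `g` adjacent to `h` iff `h ∈ A + g`, i.e. `h - g ∈ A`) equals
`(n/4)(h₂(𝒢,A) - h₁(𝒢,A))`, where `h_t = ∑_{g ≠ 0} δ(g)^t` and
`δ(g) = #{(a,a') ∈ A² : a - a' = g}`. -/
theorem stmt17 {G : Type*} [AddCommGroup G] [Fintype G] (n k : ℕ)
    (hn : Fintype.card G = n) (hodd : Odd n) (A : Finset G) (hA : A.card = k) :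
    ((∑ s ∈ (univ : Finset G).powersetCard 2,
        Nat.choose (((univ : Finset G).filter (fun h : G => ∀ g₁ ∈ s, h - g₁ ∈ A)).card) 2
        : ℕ) : ℚ)
      = (n : ℚ) / 4 *
          ((∑ g ∈ (univ : Finset G).filter (fun g => g ≠ 0),
              (((A ×ˢ A).filter (fun p => p.1 - p.2 = g)).card : ℚ) ^ 2)
            - ∑ g ∈ (univ : Finset G).filter (fun g => g ≠ 0),
              (((A ×ˢ A).filter (fun p => p.1 - p.2 = g)).card : ℚ)) := by
  classical
  subst hn
  set c : G → ℕ := fun d => ((A ×ˢ A).filter (fun p => p.1 - p.2 = d)).card with hc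
  set F : Finset G → ℕ := fun s =>
    Nat.choose (((univ : Finset G).filter (fun h : G => ∀ g ∈ s, h - g ∈ A)).card) 2 with hF
  set S : ℕ := ∑ s ∈ (univ : Finset G).powersetCard 2, F s with hS
  -- key : F of a pair
  have key : ∀ p : G × G, p.1 ≠ p.2 → F ({p.1, p.2} : Finset G) = (c (p.2 - p.1)).choose 2 := by
    intro p hp
    have : ((univ : Finset G).filter (fun h : G => ∀ g ∈ ({p.1, p.2} : Finset G), h - g ∈ A))
        = (univ : Finset G).filter (fun h : G => h - p.1 ∈ A ∧ h - p.2 ∈ A) := by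
      apply filter_congr; intro h _; simp
    rw [hF]
    simp only [this, codeg_eq A p.1 p.2]
    rfl
  -- image of pair map
  have himg : ((univ : Finset G).offDiag).image (fun p : G × G => ({p.1, p.2} : Finset G))
      = (univ : Finset G).powersetCard 2 := by
    ext s
    simp only [mem_image, mem_offDiag, mem_powersetCard, mem_univ, true_and]
    constructor
    · rintro ⟨p, hp, rfl⟩
      exact ⟨subset_univ _, card_pair hp⟩
    · rintro ⟨-, hcard⟩
      obtain ⟨a, b, hab, rfl⟩ := Finset.card_eq_two.mp hcard
      exact ⟨(a, b), hab, rfl⟩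
  -- fibers have size 2
  have hfiber : ∀ s ∈ (univ : Finset G).powersetCard 2,
      (((univ : Finset G).offDiag).filter
        (fun p : G × G => ({p.1, p.2} : Finset G) = s)).card = 2 := by
    intro s hs
    rw [mem_powersetCard] at hs
    obtain ⟨a, b, hab, rfl⟩ := Finset.card_eq_two.mp hs.2
    have : (((univ : Finset G).offDiag).filter
        (fun p : G × G => ({p.1, p.2} : Finset G) = {a, b}))
        = {(a, b), (b, a)} := by
      ext p
      simp only [mem_filter, mem_offDiag, mem_univ, true_and, mem_insert, mem_singleton,
        Prod.ext_iff]
      constructor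
      · rintro ⟨hne, hpair⟩
        have h1 : p.1 ∈ ({a, b} : Finset G) := by
          rw [← hpair]; exact mem_insert_self _ _
        have h2 : p.2 ∈ ({a, b} : Finset G) := by
          rw [← hpair]; exact mem_insert_of_mem (mem_singleton_self _)
        simp only [mem_insert, mem_singleton] at h1 h2
        rcases h1 with h1 | h1 <;> rcases h2 with h2 | h2
        · exact absurd (h1.trans h2.symm) hne
        · exact Or.inl ⟨h1, h2⟩
        · exact Or.inr ⟨h1, h2⟩
        · exact absurd (h1.trans h2.symm) hne
      · rintro (⟨h1, h2⟩ | ⟨h1, h2⟩)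
        · subst h1; subst h2; exact ⟨hab, rfl⟩
        · subst h1; subst h2
          exact ⟨hab.symm, by rw [Finset.pair_comm]⟩
    rw [this, card_insert_of_notMem, card_singleton]
    simp [Prod.ext_iff, hab]
  -- double counting
  have hdouble : ∑ p ∈ (univ : Finset G).offDiag, F ({p.1, p.2} : Finset G) = 2 * S := by
    rw [Finset.sum_comp F (fun p : G × G => ({p.1, p.2} : Finset G)), himg, hS]
    rw [Finset.mul_sum]
    apply Finset.sum_congr rfl
    intro s hs
    rw [hfiber s hs, smul_eq_mul]
  have hoff : ∑ p ∈ (univ : Finset G).offDiag, F ({p.1, p.2} : Finset G)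
      = ∑ p ∈ (univ : Finset G).offDiag, (c (p.2 - p.1)).choose 2 := by
    apply Finset.sum_congr rfl
    intro p hp
    rw [mem_offDiag] at hp
    exact key p hp.2.2
  -- sum over full product
  have hprod : ∑ p ∈ (univ : Finset G) ×ˢ (univ : Finset G), (c (p.2 - p.1)).choose 2
      = Fintype.card G * ∑ d : G, (c d).choose 2 := by
    rw [Finset.sum_product]
    have : ∀ g₁ : G, ∑ g₂ : G, (c (g₂ - g₁)).choose 2 = ∑ d : G, (c d).choose 2 := by
      intro g₁
      exact Equiv.sum_comp (Equiv.subRight g₁) (fun d => (c d).choose 2)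
    simp only [this, Finset.sum_const, smul_eq_mul, Finset.card_univ]
  -- split the product into diagonal and off-diagonal
  have hsplit : ∑ p ∈ (univ : Finset G) ×ˢ (univ : Finset G), (c (p.2 - p.1)).choose 2
      = (∑ p ∈ (univ : Finset G).offDiag, (c (p.2 - p.1)).choose 2)
        + Fintype.card G * (c 0).choose 2 := by
    have hsplit0 := Finset.sum_filter_add_sum_filter_not
      ((univ : Finset G) ×ˢ (univ : Finset G)) (fun p => p.1 ≠ p.2)
      (fun p : G × G => (c (p.2 - p.1)).choose 2)
    have he1 : ((univ : Finset G) ×ˢ (univ : Finset G)).filter (fun p => p.1 ≠ p.2)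
        = (univ : Finset G).offDiag := by
      ext p; simp [mem_offDiag]
    have he2 : ∑ p ∈ ((univ : Finset G) ×ˢ (univ : Finset G)).filter (fun p => ¬ p.1 ≠ p.2),
        (c (p.2 - p.1)).choose 2 = Fintype.card G * (c 0).choose 2 := by
      have hd : ((univ : Finset G) ×ˢ (univ : Finset G)).filter (fun p => ¬ p.1 ≠ p.2)
          = (univ : Finset G).diag := by
        ext p; simp [Finset.mem_diag, eq_comm]
      rw [hd]
      have hstep : ∑ p ∈ (univ : Finset G).diag, (c (p.2 - p.1)).choose 2
          = ∑ _p ∈ (univ : Finset G).diag, (c 0).choose 2 := by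
        apply Finset.sum_congr rfl
        intro p hp
        rw [Finset.mem_diag] at hp
        rw [← hp.2, sub_self]
      rw [hstep, Finset.sum_const, Finset.diag_card, Finset.card_univ, smul_eq_mul]
    rw [← hsplit0, he1, he2]
  -- split full sum over d into 0 and nonzero
  have hzero : ∑ d : G, (c d).choose 2
      = (∑ d ∈ (univ : Finset G).filter (fun g => g ≠ 0), (c d).choose 2) + (c 0).choose 2 := by
    have := Finset.sum_filter_add_sum_filter_not (univ : Finset G) (fun g => g ≠ 0)
      (fun d => (c d).choose 2)
    rw [← this]
    congr 1
    have : (univ : Finset G).filter (fun g => ¬ g ≠ 0) = {0} := by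
      ext g; simp
    rw [this, Finset.sum_singleton]
  -- nat identity
  have hnat : 2 * S = Fintype.card G *
      ∑ d ∈ (univ : Finset G).filter (fun g => g ≠ 0), (c d).choose 2 := by
    have h1 : Fintype.card G *
        ((∑ d ∈ (univ : Finset G).filter (fun g => g ≠ 0), (c d).choose 2) + (c 0).choose 2)
        = 2 * S + Fintype.card G * (c 0).choose 2 := by
      rw [← hzero, ← hprod, hsplit, ← hoff, hdouble]
    rw [Nat.mul_add] at h1
    omega
  -- cast to ℚ
  have hq : (2 : ℚ) * (S : ℚ) = (Fintype.card G : ℚ) *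
      ∑ d ∈ (univ : Finset G).filter (fun g => g ≠ 0), ((c d : ℚ) * ((c d : ℚ) - 1) / 2) := by
    have := congrArg (fun m : ℕ => (m : ℚ)) hnat
    push_cast at this
    rw [this]
    congr 1
    apply Finset.sum_congr rfl
    intro d _
    rw [Nat.cast_choose_two]
  have hsum : ∑ d ∈ (univ : Finset G).filter (fun g => g ≠ 0), ((c d : ℚ) * ((c d : ℚ) - 1) / 2)
      = ((∑ d ∈ (univ : Finset G).filter (fun g => g ≠ 0), (c d : ℚ) ^ 2)
        - ∑ d ∈ (univ : Finset G).filter (fun g => g ≠ 0), (c d : ℚ)) / 2 := by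
    rw [← Finset.sum_sub_distrib, ← Finset.sum_div]
    congr 1
    apply Finset.sum_congr rfl
    intro d _
    ring
  rw [hsum] at hq
  have : ((∑ s ∈ (univ : Finset G).powersetCard 2,
      Nat.choose (((univ : Finset G).filter (fun h : G => ∀ g₁ ∈ s, h - g₁ ∈ A)).card) 2
      : ℕ) : ℚ) = (S : ℚ) := by rw [hS]
  rw [this]
  rw [hc] at hq
  linarith [hq]
end
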